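/- For all u = x(α+sβ) + y(γ+sδ) with x, y ∈ S²_{qs}, the covariant derivative ∇(u) = du - u·ω(g⁺₁), where ω(g⁺₁) = (1/(1+s²))((δ-qsγ)d(α+sβ) + (sα-q^{-1}β)d(γ+sδ)) and d is the universal differential dp = 1⊗p - p⊗1 in Ω¹SU_q(2) ⊆ SU_q(2)⊗SU_q(2), equals ((dx, dy) + (x,y)de_s)·(α+sβ, γ+sδ)ᵗ, where de_s is applied entrywise. In particular, under the identification Θ_s, ∇ equals the Grassmannian connection ∇((x,y)e_s) = (d(x,y) + (x,y)de_s)e_s. -/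
import Mathlib


open scoped TensorProduct

/-- ξ = s(α² - q⁻¹β²) + (s²-1)q⁻¹αβ -/
def xiE {k A : Type*} [Field k] [Ring A] [Algebra k A] (q s : k) (α β : A) : A :=
  s • (α^2) - (s*q⁻¹) • (β^2) + ((s^2-1)*q⁻¹) • (α*β)

/-- η = s(qγ² - δ²) + (s²-1)γδ -/
def etaE {k A : Type*} [Field k] [Ring A] [Algebra k A] (q s : k) (γ δ : A) : A :=
  (s*q) • (γ^2) - s • (δ^2) + (s^2-1) • (γ*δ)

/-- ζ = s(qαγ - βδ) + (s²-1)qβγ -/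
def zetaE {k A : Type*} [Field k] [Ring A] [Algebra k A] (q s : k) (α β γ δ : A) : A :=
  (s*q) • (α*γ) - s • (β*δ) + ((s^2-1)*q) • (β*γ)

/-- The projector e_s = (1/(1+s²)) [[1-ζ, ξ],[-η, s²+q⁻²ζ]] -/
def esMat {k A : Type*} [Field k] [Ring A] [Algebra k A] (q s : k) (α β γ δ : A) :
    Matrix (Fin 2) (Fin 2) A :=
  (1+s^2)⁻¹ • !![1 - zetaE q s α β γ δ, xiE q s α β;
                 -etaE q s γ δ, (s^2) • (1:A) + (q^2)⁻¹ • zetaE q s α β γ δ]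

/-- The right ideal J_s = {ξ-s, η+s, ζ}·SU_q(2) -/
def Jideal {k A : Type*} [Field k] [Ring A] [Algebra k A] (q s : k) (α β γ δ : A) : Set A :=
  {z | ∃ p₁ p₂ p₃ : A, z = (xiE q s α β - s • 1) * p₁ + (etaE q s γ δ + s • 1) * p₂ +
      zetaE q s α β γ δ * p₃}

theorem stmt11 {k A : Type*} [Field k] [Ring A] [Algebra k A]
    (q s : k) (α β γ δ : A)
    (h1 : α*β = q • (β*α)) (h2 : α*γ = q • (γ*α)) (h3 : β*γ = γ*β)
    (h4 : β*δ = q • (δ*β)) (h5 : γ*δ = q • (δ*γ))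
    (h6 : α*δ = δ*α + (q - q⁻¹) • (β*γ)) (h7 : α*δ - q • (β*γ) = 1)
    (hq : q ≠ 0) (hs : (1:k) + s^2 ≠ 0) :
    letI D : A → A ⊗[k] A := fun p => (1:A) ⊗ₜ[k] p - p ⊗ₜ[k] (1:A)
    letI ω : A ⊗[k] A := (1 + s^2)⁻¹ •
      (((δ - (q*s) • γ) ⊗ₜ[k] (1:A)) * D (α + s • β) +
       ((s • α - q⁻¹ • β) ⊗ₜ[k] (1:A)) * D (γ + s • δ))
    ∀ x y : A, x ∈ Algebra.adjoin k {xiE q s α β, etaE q s γ δ, zetaE q s α β γ δ} → y ∈ Algebra.adjoin k {xiE q s α β, etaE q s γ δ, zetaE q s α β γ δ} →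
      D (x * (α + s • β) + y * (γ + s • δ)) -
        ((x * (α + s • β) + y * (γ + s • δ)) ⊗ₜ[k] (1:A)) * ω =
      ∑ i : Fin 2,
        (D (![x, y] i) + ∑ j : Fin 2, ((![x, y] j) ⊗ₜ[k] (1:A)) * D (esMat q s α β γ δ j i)) *
          ((1:A) ⊗ₜ[k] (![α + s • β, γ + s • δ] i)) := by
  have hda : δ*α = α*δ - (q - q⁻¹) • (β*γ) := by rw [h6]; abel
  have hdb : δ*β = q⁻¹ • (β*δ) := by rw [h4, smul_smul, inv_mul_cancel₀ hq, one_smul]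
  have hga : γ*α = q⁻¹ • (α*γ) := by rw [h2, smul_smul, inv_mul_cancel₀ hq, one_smul]
  have hba : β*α = q⁻¹ • (α*β) := by rw [h1, smul_smul, inv_mul_cancel₀ hq, one_smul]
  have hdg : δ*γ = q⁻¹ • (γ*δ) := by rw [h5, smul_smul, inv_mul_cancel₀ hq, one_smul]
  have hrow : (δ - (q*s) • γ) * (α + s • β) + (s • α - q⁻¹ • β) * (γ + s • δ)
      = (1+s^2) • (1:A) := by
    rw [← h7]
    simp only [mul_add, add_mul, sub_mul, mul_sub, smul_mul_assoc, mul_smul_comm,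
      smul_add, smul_sub, smul_smul, hda, hdb, hga, ← h3]
    match_scalars <;> field_simp <;> (try (first | ring1 | (left; ring1) | (right; ring1)))
  have hc : (s • α - q⁻¹ • β) * (γ + s • δ)
      = (1+s^2) • (1:A) - (δ - (q*s) • γ) * (α + s • β) := by
    rw [eq_sub_iff_add_eq, add_comm, hrow]
  have hE00 : esMat q s α β γ δ 0 0
      = (1+s^2)⁻¹ • ((α + s • β) * (δ - (q*s) • γ)) := by
    simp only [esMat, Matrix.smul_apply, Matrix.cons_val', Matrix.cons_val_zero,
      Matrix.empty_val', Matrix.cons_val_fin_one, Matrix.cons_val_one, Matrix.head_cons,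
      Matrix.head_fin_const, Matrix.of_apply]
    congr 1
    rw [← h7]
    simp only [zetaE, mul_add, add_mul, sub_mul, mul_sub, smul_mul_assoc, mul_smul_comm,
      smul_add, smul_sub, smul_smul]
    match_scalars <;> field_simp <;> (try (first | ring1 | (left; ring1) | (right; ring1)))
  have hE01 : esMat q s α β γ δ 0 1
      = (1+s^2)⁻¹ • ((α + s • β) * (s • α - q⁻¹ • β)) := by
    simp only [esMat, Matrix.smul_apply, Matrix.cons_val', Matrix.cons_val_zero,
      Matrix.empty_val', Matrix.cons_val_fin_one, Matrix.cons_val_one, Matrix.head_cons,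
      Matrix.head_fin_const, Matrix.of_apply]
    congr 1
    simp only [xiE, pow_two, mul_add, add_mul, sub_mul, mul_sub, smul_mul_assoc,
      mul_smul_comm, smul_add, smul_sub, smul_smul, hba]
    match_scalars <;> field_simp <;> (try (first | ring1 | (left; ring1) | (right; ring1)))
  have hE10 : esMat q s α β γ δ 1 0
      = (1+s^2)⁻¹ • ((γ + s • δ) * (δ - (q*s) • γ)) := by
    simp only [esMat, Matrix.smul_apply, Matrix.cons_val', Matrix.cons_val_zero,
      Matrix.empty_val', Matrix.cons_val_fin_one, Matrix.cons_val_one, Matrix.head_cons,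
      Matrix.head_fin_const, Matrix.of_apply]
    congr 1
    simp only [etaE, pow_two, mul_add, add_mul, sub_mul, mul_sub, smul_mul_assoc,
      mul_smul_comm, smul_add, smul_sub, smul_smul, hdg, neg_add, neg_sub]
    match_scalars <;> field_simp <;> (try (first | ring1 | (left; ring1) | (right; ring1)))
  have hE11 : esMat q s α β γ δ 1 1
      = (1+s^2)⁻¹ • ((γ + s • δ) * (s • α - q⁻¹ • β)) := by
    simp only [esMat, Matrix.smul_apply, Matrix.cons_val', Matrix.cons_val_zero,
      Matrix.empty_val', Matrix.cons_val_fin_one, Matrix.cons_val_one, Matrix.head_cons,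
      Matrix.head_fin_const, Matrix.of_apply]
    congr 1
    rw [← h7]
    simp only [zetaE, mul_add, add_mul, sub_mul, mul_sub, smul_mul_assoc, mul_smul_comm,
      smul_add, smul_sub, smul_smul, hda, hdb, hga, ← h3]
    match_scalars <;> field_simp <;> (try (first | ring1 | (left; ring1) | (right; ring1)))
  intro x y hx hy
  simp only [Fin.sum_univ_two, Matrix.cons_val_zero, Matrix.cons_val_one, Matrix.head_cons]
  rw [hE00, hE01, hE10, hE11]
  set a := α + s • β with hadef
  set c := γ + s • δ with hcdef
  set r0 := δ - (q*s) • γ with hr0def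
  set r1 := s • α - q⁻¹ • β with hr1def
  simp only [mul_add, add_mul, mul_sub, sub_mul, smul_sub, smul_add, smul_smul,
    Algebra.TensorProduct.tmul_mul_tmul, mul_one, one_mul, smul_mul_assoc, mul_smul_comm,
    TensorProduct.tmul_smul, ← TensorProduct.smul_tmul', TensorProduct.tmul_add,
    TensorProduct.add_tmul, TensorProduct.tmul_sub, TensorProduct.sub_tmul, mul_assoc]
  rw [hc]
  simp only [mul_sub, mul_smul_comm, mul_one, smul_sub, smul_smul,
    TensorProduct.tmul_smul, ← TensorProduct.smul_tmul', TensorProduct.tmul_sub,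
    TensorProduct.sub_tmul]
  match_scalars <;> field_simp <;> (try (first | ring1 | (left; ring1) | (right; ring1)))
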